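/- If N ≥ 0 is an even integer, then FSh₂(N) = {0}, i.e. the only rational function in the Fay-shuffle space of weight N is the zero function. -/

import Mathlib

noncomputable section

open MvPolynomial

/-- The polynomial ring `ℚ[X,Y]`, with `X = X 0` and `Y = X 1`. -/
abbrev R2 : Type := MvPolynomial (Fin 2) ℚ

/-- The field of rational functions `ℚ(X,Y)`. -/
abbrev K2 : Type := FractionRing R2

/-- The substitution `(X, Y) ↦ (X + Y, -Y)` on polynomials. -/
def fayA : R2 →ₐ[ℚ] R2 := aeval ![X 0 + X 1, -X 1]

/-- The substitution `(X, Y) ↦ (-X - Y, X)` on polynomials. -/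
def rotA : R2 →ₐ[ℚ] R2 := aeval ![-X 0 - X 1, X 0]

/-- The substitution `(X, Y) ↦ (Y, X)` on polynomials. -/
def swapA : R2 →ₐ[ℚ] R2 := aeval ![X 1, X 0]

lemma fayA_invol : fayA.comp fayA = AlgHom.id ℚ R2 := by
  apply algHom_ext
  intro i
  fin_cases i <;> simp [fayA]

lemma rotA_cube : rotA.comp (rotA.comp rotA) = AlgHom.id ℚ R2 := by
  apply algHom_ext
  intro i
  fin_cases i <;> simp [rotA]

lemma swapA_invol : swapA.comp swapA = AlgHom.id ℚ R2 := by
  apply algHom_ext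
  intro i
  fin_cases i <;> simp [swapA]

lemma fayA_inj : Function.Injective fayA :=
  Function.LeftInverse.injective (g := fayA) fun x => by
    simpa using DFunLike.congr_fun fayA_invol x

lemma rotA_inj : Function.Injective rotA :=
  Function.LeftInverse.injective (g := rotA.comp rotA) fun x => by
    simpa using DFunLike.congr_fun rotA_cube x

lemma swapA_inj : Function.Injective swapA :=
  Function.LeftInverse.injective (g := swapA) fun x => by
    simpa using DFunLike.congr_fun swapA_invol x

/-- Lift an injective substitution on `ℚ[X,Y]` to the fraction field `ℚ(X,Y)`. -/
def liftK (φ : R2 →ₐ[ℚ] R2) (hφ : Function.Injective φ) : K2 →+* K2 :=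
  IsFractionRing.lift (g := (algebraMap R2 K2).comp φ.toRingHom)
    (fun _ _ h => hφ (IsFractionRing.injective R2 K2 h))

/-- `P(X,Y) ↦ P(X+Y, -Y)` as a `ℚ`-linear endomorphism of `ℚ(X,Y)`. -/
def fayL : K2 →ₗ[ℚ] K2 :=
  { toFun := liftK fayA fayA_inj, map_add' := map_add _,
    map_smul' := fun c x => by simp only [RingHom.id_apply]; exact map_rat_smul (liftK fayA fayA_inj) c x }

/-- `P(X,Y) ↦ P(-X-Y, X)` as a `ℚ`-linear endomorphism of `ℚ(X,Y)`. -/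
def rotL : K2 →ₗ[ℚ] K2 :=
  { toFun := liftK rotA rotA_inj, map_add' := map_add _,
    map_smul' := fun c x => by simp only [RingHom.id_apply]; exact map_rat_smul (liftK rotA rotA_inj) c x }

/-- `P(X,Y) ↦ P(Y, X)` as a `ℚ`-linear endomorphism of `ℚ(X,Y)`. -/
def swapL : K2 →ₗ[ℚ] K2 :=
  { toFun := liftK swapA swapA_inj, map_add' := map_add _,
    map_smul' := fun c x => by simp only [RingHom.id_apply]; exact map_rat_smul (liftK swapA swapA_inj) c x }

/-- The inclusion `ℚ[X,Y] → ℚ(X,Y)` as a `ℚ`-linear map. -/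
def algL : R2 →ₗ[ℚ] K2 :=
  { toFun := algebraMap R2 K2, map_add' := map_add _,
    map_smul' := fun c x => by simp only [RingHom.id_apply]; exact map_rat_smul (algebraMap R2 K2) c x }

/-- The element `X·Y ∈ ℚ(X,Y)`. -/
def xyK : K2 := algebraMap R2 K2 (X 0 * X 1)

/-- The length-two Fay-shuffle space `FSh₂(N)`: rational functions `P(X,Y)`,
homogeneous of degree `N - 2` with at most simple poles along `X = 0` and `Y = 0`
and no other poles (equivalently, `X·Y·P` is a homogeneous polynomial of degree `N`),
satisfying the Fay relation `P(X,Y) + P(X+Y,-Y) + P(-X-Y,X) = 0` and the shuffle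
relation `P(X,Y) + P(Y,X) = 0`. -/
def FSh (N : ℕ) : Submodule ℚ K2 :=
  (Submodule.map algL (homogeneousSubmodule (Fin 2) ℚ N)).comap (LinearMap.mulLeft ℚ xyK)
    ⊓ LinearMap.ker (LinearMap.id + fayL + rotL)
    ⊓ LinearMap.ker (LinearMap.id + swapL)


/-- The substitution `(X, Y) ↦ (-X, -Y)` on polynomials. -/
def negA : R2 →ₐ[ℚ] R2 := aeval ![-X 0, -X 1]

lemma negA_monomial (d : Fin 2 →₀ ℕ) (c : ℚ) :
    negA (monomial d c) = (-1 : R2) ^ d.degree * monomial d c := by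
  have h : (![-X 0, -X 1] : Fin 2 → R2) = fun i => -X i := by
    funext i; fin_cases i <;> rfl
  rw [negA, h, aeval_monomial, monomial_eq]
  have h1 : (d.prod fun i k => (-X i : R2) ^ k)
      = (d.prod fun i k => (-1 : R2) ^ k) * d.prod fun i k => (X i : R2) ^ k := by
    rw [← Finsupp.prod_mul]
    exact Finsupp.prod_congr fun i _ => by rw [neg_pow]
  have h2 : (d.prod fun i k => (-1 : R2) ^ k) = (-1 : R2) ^ d.degree := by
    rw [Finsupp.prod, Finset.prod_pow_eq_pow_sum]
    rfl
  rw [h1, h2, algebraMap_eq]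
  ring

lemma negA_even {N : ℕ} (hN : Even N) {Q : R2}
    (hQ : Q ∈ homogeneousSubmodule (Fin 2) ℚ N) : negA Q = Q := by
  rw [mem_homogeneousSubmodule] at hQ
  conv_lhs => rw [Q.as_sum]
  rw [map_sum]
  conv_rhs => rw [Q.as_sum]
  refine Finset.sum_congr rfl fun d hd => ?_
  have hdeg : d.degree = N := by
    have := hQ (mem_support_iff.mp hd)
    rw [Finsupp.degree_eq_weight_one]; exact this
  rw [negA_monomial, hdeg, hN.neg_one_pow, one_mul]

lemma fay_rot_comp : fayA.comp rotA = rotA.comp (swapA.comp negA) := by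
  apply algHom_ext
  intro i
  fin_cases i <;> simp [fayA, rotA, swapA, negA] <;> ring

set_option maxHeartbeats 1000000 in
lemma liftK_alg (φ : R2 →ₐ[ℚ] R2) (h : Function.Injective φ) (p : R2) :
    liftK φ h (algebraMap R2 K2 p) = algebraMap R2 K2 (φ p) := by
  unfold liftK
  exact IsFractionRing.lift_algebraMap _ p


set_option maxHeartbeats 2000000 in
/-- If `N` is even, then the only element of the Fay-shuffle space `FSh₂(N)` is `0`. -/
theorem FSh_even_eq_bot (N : ℕ) (hN : Even N) : FSh N = ⊥ := by
  rw [eq_bot_iff]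
  intro P hP
  obtain ⟨⟨hpoly, hfay⟩, hswap⟩ := hP
  obtain ⟨Q, hQhom, hQ⟩ := hpoly
  set ι := algebraMap R2 K2 with hι
  have hinj : Function.Injective ι := IsFractionRing.injective R2 K2
  set F := liftK fayA fayA_inj with hFdef
  set Rt := liftK rotA rotA_inj with hRdef
  set Sw := liftK swapA swapA_inj with hSdef
  set x := ι (X 0) with hx
  set y := ι (X 1) with hy
  -- the basic relations
  have hfay' : P + F P + Rt P = 0 := by
    have := hfay
    simpa [LinearMap.mem_ker, fayL, rotL] using this
  have hswap' : Sw P = -P := by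
    have := hswap
    simp only [SetLike.mem_coe, LinearMap.mem_ker, LinearMap.add_apply, LinearMap.id_apply] at this
    have h' : P + Sw P = 0 := by simpa [swapL] using this
    linear_combination h'
  have hq : ι Q = x * y * P := by
    have : algL Q = xyK * P := hQ
    simpa [algL, xyK, map_mul, hx, hy, mul_assoc] using this
  -- values of the substitutions on x, y
  have hFx : F x = x + y := by rw [hx, liftK_alg]; simp [fayA, hx, hy, hι]
  have hFy : F y = -y := by rw [hy, liftK_alg]; simp [fayA, hx, hy, hι]
  have hRx : Rt x = -x - y := by rw [hx, liftK_alg]; simp [rotA, hx, hy, hι]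
  have hRy : Rt y = x := by rw [hy, liftK_alg]; simp [rotA, hx, hy, hι]
  have hSx : Sw x = y := by rw [hx, liftK_alg]; simp [swapA, hx, hy, hι]
  have hSy : Sw y = x := by rw [hy, liftK_alg]; simp [swapA, hx, hy, hι]
  -- antisymmetry of Q
  have hQswap : swapA Q = -Q := by
    apply hinj
    have : Sw (ι Q) = ι (swapA Q) := liftK_alg _ _ _
    rw [← this, hq, map_mul, map_mul, hSx, hSy, hswap', map_neg, hq]
    ring
  -- the Fay polynomial identity E1
  have hFQ : F (ι Q) = (x + y) * (-y) * F P := by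
    rw [hq, map_mul, map_mul, hFx, hFy]
  have hRQ : Rt (ι Q) = (-x - y) * x * Rt P := by
    rw [hq, map_mul, map_mul, hRx, hRy]
  have e1 : (x + y) * ι Q = x * F (ι Q) + y * Rt (ι Q) := by
    linear_combination (x + y) * hq - x * hFQ - y * hRQ + x * y * (x + y) * hfay'
  -- apply F to e1
  have hFFQ : F (F (ι Q)) = ι Q := by
    rw [liftK_alg, liftK_alg]
    congr 1
    simpa using DFunLike.congr_fun fayA_invol Q
  have hFRQ : F (Rt (ι Q)) = - Rt (ι Q) := by
    rw [liftK_alg, liftK_alg]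
    have hc : fayA (rotA Q) = rotA (swapA (negA Q)) := by
      simpa using DFunLike.congr_fun fay_rot_comp Q
    rw [hc, negA_even hN hQhom, hQswap, map_neg, map_neg]
  have e2 : (F x + F y) * F (ι Q) = F x * F (F (ι Q)) + F y * F (Rt (ι Q)) := by
    have h := congrArg F e1
    simp only [map_add, map_mul] at h
    exact h
  rw [hFx, hFy, hFFQ, hFRQ] at e2
  -- conclude 2 * y * Rt (ι Q) = 0
  have hkey : (2 : K2) * (y * Rt (ι Q)) = 0 := by
    linear_combination -e1 - e2
  have hy0 : y ≠ 0 := by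
    rw [hy]
    exact fun h => X_ne_zero (R := ℚ) (1 : Fin 2) (hinj (by simpa using h))
  have h2 : (2 : K2) ≠ 0 := two_ne_zero
  have hRtQ : Rt (ι Q) = 0 := by
    rcases mul_eq_zero.mp hkey with h | h
    · exact absurd h h2
    · rcases mul_eq_zero.mp h with h' | h'
      · exact absurd h' hy0
      · exact h'
  have hQ0 : Q = 0 := by
    apply rotA_inj
    rw [map_zero]
    apply hinj
    rw [map_zero, ← liftK_alg rotA rotA_inj Q]
    exact hRtQ
  have hx0 : x ≠ 0 := by
    rw [hx]
    exact fun h => X_ne_zero (R := ℚ) (0 : Fin 2) (hinj (by simpa using h))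
  have : x * y * P = 0 := by rw [← hq, hQ0, map_zero]
  have hP0 : P = 0 := by
    rcases mul_eq_zero.mp this with h | h
    · exact absurd h (mul_ne_zero hx0 hy0)
    · exact h
  simpa using hP0


end
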